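/- Let f : X → (−∞,+∞] be proper and γ > 0. Then argmin f ⊆ argmin(^γf) ∩ dom(prox_{γf}) ⊆ {x : prox_{γf}(x) = {x}} ⊆ Fix prox_{γf} ⊆ {x : 0 ∈ ∂_p f(x)}, and if f is in addition lsc and convex, all inclusions hold with equality. -/

import Mathlib

open Filter Topology RealInnerProductSpace

/-- `f : X → (−∞,+∞]` is proper: it never takes the value `−∞` and is somewhere
finite.  (We model `(−∞,+∞]`-valued functions as `EReal`-valued functions.) -/
def ProperFn {X : Type*} (f : X → EReal) : Prop :=
  (∃ x, f x ≠ ⊤) ∧ ∀ x, f x ≠ ⊥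

/-- The Moreau envelope `^γf(x) = inf_y (f(y) + (1/(2γ))‖x−y‖²)`. -/
noncomputable def moreau {X : Type*} [NormedAddCommGroup X]
    (γ : ℝ) (f : X → EReal) (x : X) : EReal :=
  ⨅ y : X, f y + ((1 / (2 * γ) * ‖x - y‖ ^ 2 : ℝ) : EReal)

/-- The proximal subdifferential `∂_p f(x)`. -/
def psubdiff {X : Type*} [NormedAddCommGroup X] [InnerProductSpace ℝ X]
    (f : X → EReal) (x : X) : Set X :=
  {v | ∃ γ > (0 : ℝ), ∃ δ > (0 : ℝ), ∀ y ∈ Metric.closedBall x δ,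
    ((⟪v, y - x⟫ : ℝ) : EReal) ≤ f y - f x + ((1 / (2 * γ) * ‖y - x‖ ^ 2 : ℝ) : EReal)}

/-- The proximity operator: points attaining the infimum in the Moreau envelope,
`prox_{γf}(x) = {p : f(p) + (1/(2γ))‖x−p‖² = ^γf(x)}`. -/
noncomputable def proxSet {X : Type*} [NormedAddCommGroup X]
    (γ : ℝ) (f : X → EReal) (x : X) : Set X :=
  {p | f p + ((1 / (2 * γ) * ‖x - p‖ ^ 2 : ℝ) : EReal) = moreau γ f x}

/-- Convexity of an `EReal`-valued function. -/
def ERealConvexFn {X : Type*} [AddCommGroup X] [Module ℝ X] (f : X → EReal) : Prop :=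
  ∀ x y : X, ∀ t : ℝ, 0 < t → t < 1 →
    f (t • x + (1 - t) • y) ≤ (t : EReal) * f x + ((1 - t : ℝ) : EReal) * f y

section AuxStmt13
variable {X : Type*} [NormedAddCommGroup X]

lemma stmt13_moreau_le (γ : ℝ) (f : X → EReal) (x y : X) :
    moreau γ f x ≤ f y + ((1 / (2 * γ) * ‖x - y‖ ^ 2 : ℝ) : EReal) :=
  iInf_le _ y

lemma stmt13_moreau_le_self (γ : ℝ) (f : X → EReal) (x : X) : moreau γ f x ≤ f x := by
  simpa using stmt13_moreau_le γ f x x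

lemma stmt13_moreau_ne_top (γ : ℝ) {f : X → EReal} (hf : ProperFn f) (x : X) :
    moreau γ f x ≠ ⊤ := by
  obtain ⟨y, hy⟩ := hf.1
  exact (lt_of_le_of_lt (stmt13_moreau_le γ f x y)
    (EReal.add_lt_top hy (EReal.coe_ne_top _))).ne

lemma stmt13_le_add_sq (a : EReal) (r : ℝ) (hr : 0 ≤ r) : a ≤ a + (r : EReal) := by
  nth_rewrite 1 [← add_zero a]
  exact add_le_add le_rfl (by exact_mod_cast hr)

end AuxStmt13

theorem stmt_13 {X : Type*}
    [NormedAddCommGroup X] [InnerProductSpace ℝ X] [FiniteDimensional ℝ X]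
    (f : X → EReal) (hf : ProperFn f) (γ : ℝ) (hγ : 0 < γ) :
    ({x : X | ∀ y, f x ≤ f y} ⊆
      {x : X | ∀ y, moreau γ f x ≤ moreau γ f y} ∩ {x : X | (proxSet γ f x).Nonempty}) ∧
    ({x : X | ∀ y, moreau γ f x ≤ moreau γ f y} ∩ {x : X | (proxSet γ f x).Nonempty} ⊆
      {x : X | proxSet γ f x = {x}}) ∧
    ({x : X | proxSet γ f x = {x}} ⊆ {x : X | x ∈ proxSet γ f x}) ∧
    ({x : X | x ∈ proxSet γ f x} ⊆ {x : X | (0 : X) ∈ psubdiff f x}) ∧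
    (LowerSemicontinuous f → ERealConvexFn f →
      ({x : X | ∀ y, f x ≤ f y} =
        {x : X | ∀ y, moreau γ f x ≤ moreau γ f y} ∩ {x : X | (proxSet γ f x).Nonempty} ∧
      {x : X | ∀ y, moreau γ f x ≤ moreau γ f y} ∩ {x : X | (proxSet γ f x).Nonempty} =
        {x : X | proxSet γ f x = {x}} ∧
      {x : X | proxSet γ f x = {x}} = {x : X | x ∈ proxSet γ f x} ∧
      {x : X | x ∈ proxSet γ f x} = {x : X | (0 : X) ∈ psubdiff f x})) := by
  have hc : (0:ℝ) < 1 / (2 * γ) := by positivity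
  -- Inclusion 1
  have inc1 : {x : X | ∀ y, f x ≤ f y} ⊆
      {x : X | ∀ y, moreau γ f x ≤ moreau γ f y} ∩ {x : X | (proxSet γ f x).Nonempty} := by
    intro x hx
    have hmx : moreau γ f x = f x := by
      refine le_antisymm (stmt13_moreau_le_self γ f x) (le_iInf fun z => ?_)
      exact le_trans (hx z) (stmt13_le_add_sq _ _ (by positivity))
    constructor
    · intro y
      rw [hmx]
      exact le_iInf fun z => le_trans (hx z) (stmt13_le_add_sq _ _ (by positivity))
    · exact ⟨x, by simp [proxSet, hmx]⟩
  -- key for inclusion 2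
  have key2 : ∀ x : X, (∀ y, moreau γ f x ≤ moreau γ f y) →
      ∀ q ∈ proxSet γ f x, q = x := by
    intro x hmin q hq
    have hq' : f q + ((1 / (2 * γ) * ‖x - q‖ ^ 2 : ℝ) : EReal) = moreau γ f x := hq
    have h1 : moreau γ f x ≤ f q := le_trans (hmin q) (stmt13_moreau_le_self γ f q)
    have hqt : f q ≠ ⊤ := by
      intro h
      apply stmt13_moreau_ne_top γ hf x
      rw [← hq', h, EReal.top_add_coe]
    obtain ⟨b, hb⟩ : ∃ b : ℝ, f q = (b : EReal) :=
      ⟨(f q).toReal, (EReal.coe_toReal hqt (hf.2 q)).symm⟩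
    rw [← hq', hb, ← EReal.coe_add, EReal.coe_le_coe_iff] at h1
    have hs : ‖x - q‖ ^ 2 ≤ 0 := by nlinarith [h1, hc]
    have hs0 : ‖x - q‖ = 0 := by nlinarith [sq_nonneg ‖x - q‖, norm_nonneg (x - q)]
    have : x - q = 0 := norm_eq_zero.mp hs0
    have : x = q := by rwa [sub_eq_zero] at this
    exact this.symm
  have inc2 : {x : X | ∀ y, moreau γ f x ≤ moreau γ f y} ∩
      {x : X | (proxSet γ f x).Nonempty} ⊆ {x : X | proxSet γ f x = {x}} := by
    rintro x ⟨hmin, p, hp⟩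
    rw [Set.mem_setOf_eq] at hmin
    have hpx : p = x := key2 x hmin p hp
    subst hpx
    ext q
    simp only [Set.mem_singleton_iff]
    exact ⟨key2 p hmin q, fun h => h ▸ hp⟩
  have inc3 : {x : X | proxSet γ f x = {x}} ⊆ {x : X | x ∈ proxSet γ f x} := by
    intro x hx
    rw [Set.mem_setOf_eq] at hx ⊢
    rw [hx]
    exact Set.mem_singleton x
  have inc4 : {x : X | x ∈ proxSet γ f x} ⊆ {x : X | (0 : X) ∈ psubdiff f x} := by
    intro x hx
    rw [Set.mem_setOf_eq] at hx
    have hx' : f x = moreau γ f x := by simpa [proxSet] using hx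
    have hxt : f x ≠ ⊤ := by rw [hx']; exact stmt13_moreau_ne_top γ hf x
    obtain ⟨a, ha⟩ : ∃ a : ℝ, f x = (a : EReal) :=
      ⟨(f x).toReal, (EReal.coe_toReal hxt (hf.2 x)).symm⟩
    refine ⟨γ, hγ, 1, one_pos, fun y _ => ?_⟩
    have h1 := stmt13_moreau_le γ f x y
    rw [← hx', ha] at h1
    rw [inner_zero_left, EReal.coe_zero, ha, norm_sub_rev y x]
    rcases eq_or_ne (f y) ⊤ with ht | ht
    · rw [ht, EReal.top_sub_coe, EReal.top_add_coe]
      exact le_top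
    · obtain ⟨b, hb⟩ : ∃ b : ℝ, f y = (b : EReal) :=
        ⟨(f y).toReal, (EReal.coe_toReal ht (hf.2 y)).symm⟩
      rw [hb] at h1 ⊢
      rw [← EReal.coe_add, EReal.coe_le_coe_iff] at h1
      rw [← EReal.coe_sub, ← EReal.coe_add]
      exact_mod_cast (by linarith : (0:ℝ) ≤ b - a + 1 / (2 * γ) * ‖x - y‖ ^ 2)
  -- reverse: 0 ∈ ∂_p f(x) implies x minimizes f, for convex f
  have key5 : ERealConvexFn f →
      {x : X | (0 : X) ∈ psubdiff f x} ⊆ {x : X | ∀ y, f x ≤ f y} := by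
    intro hconv x hx
    obtain ⟨γ', hγ', δ, hδ, h⟩ := hx
    have hx0 := h x (by simp [hδ.le])
    have hxt : f x ≠ ⊤ := by
      intro ht
      rw [ht] at hx0
      simp at hx0
    obtain ⟨a, ha⟩ : ∃ a : ℝ, f x = (a : EReal) :=
      ⟨(f x).toReal, (EReal.coe_toReal hxt (hf.2 x)).symm⟩
    intro y
    rcases eq_or_ne (f y) ⊤ with ht | ht
    · rw [ht]; exact le_top
    obtain ⟨b, hb⟩ : ∃ b : ℝ, f y = (b : EReal) :=
      ⟨(f y).toReal, (EReal.coe_toReal ht (hf.2 y)).symm⟩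
    rw [ha, hb, EReal.coe_le_coe_iff]
    set K : ℝ := 1 / (2 * γ') * ‖y - x‖ ^ 2 with hK
    have hK0 : 0 ≤ K := by positivity
    refine le_of_forall_pos_le_add fun ε hε => ?_
    set t : ℝ := min (1/2) (min (δ / (‖y - x‖ + 1)) (ε / (K + 1))) with htdef
    have hyx1 : (0:ℝ) < ‖y - x‖ + 1 := by positivity
    have ht0 : 0 < t := by
      refine lt_min (by norm_num) (lt_min (by positivity) (by positivity))
    have ht1 : t < 1 := lt_of_le_of_lt (min_le_left _ _) (by norm_num)
    set z := t • y + (1 - t) • x with hz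
    have hzx : z - x = t • (y - x) := by
      rw [hz]
      rw [smul_sub, sub_smul, one_smul]
      abel
    have hznorm : ‖z - x‖ = t * ‖y - x‖ := by
      rw [hzx, norm_smul, Real.norm_eq_abs, abs_of_pos ht0]
    have hzball : z ∈ Metric.closedBall x δ := by
      rw [Metric.mem_closedBall, dist_eq_norm, hznorm]
      have h1 : t ≤ δ / (‖y - x‖ + 1) := le_trans (min_le_right _ _) (min_le_left _ _)
      have h2 : t * ‖y - x‖ ≤ (δ / (‖y - x‖ + 1)) * (‖y - x‖ + 1) := by
        apply mul_le_mul h1 (by linarith [norm_nonneg (y - x)]) (norm_nonneg _)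
        positivity
      rw [div_mul_cancel₀ _ (ne_of_gt hyx1)] at h2
      exact h2
    have hcv := hconv y x t ht0 ht1
    rw [ha, hb, ← EReal.coe_mul, ← EReal.coe_mul, ← EReal.coe_add] at hcv
    have hzt : f z ≠ ⊤ := fun hh => by rw [hh, top_le_iff] at hcv; exact EReal.coe_ne_top _ hcv
    obtain ⟨v, hv⟩ : ∃ v : ℝ, f z = (v : EReal) :=
      ⟨(f z).toReal, (EReal.coe_toReal hzt (hf.2 z)).symm⟩
    rw [hv, EReal.coe_le_coe_iff] at hcv
    have hsub := h z hzball
    rw [inner_zero_left, EReal.coe_zero, ha, hv, hzx] at hsub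
    rw [← EReal.coe_sub, ← EReal.coe_add] at hsub
    have hsub' : (0:ℝ) ≤ v - a + 1 / (2 * γ') * ‖t • (y - x)‖ ^ 2 := by
      exact_mod_cast hsub
    rw [norm_smul, Real.norm_eq_abs, abs_of_pos ht0, mul_pow] at hsub'
    -- from hsub' : 0 ≤ v - a + 1/(2γ') * (t^2 * ‖y-x‖^2)
    have h5 : t * a ≤ t * (b + t * K) := by nlinarith [hsub', hcv]
    have h6 : a ≤ b + t * K := (mul_le_mul_iff_right₀ ht0).mp h5
    have h7 : t * (K + 1) ≤ ε := by
      have : t ≤ ε / (K + 1) := le_trans (min_le_right _ _) (min_le_right _ _)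
      calc t * (K + 1) ≤ (ε / (K + 1)) * (K + 1) := by
            apply mul_le_mul_of_nonneg_right this (by linarith)
        _ = ε := div_mul_cancel₀ _ (by linarith)
    nlinarith [h6, h7, ht0, hK0]
  refine ⟨inc1, inc2, inc3, inc4, fun _ hconv => ?_⟩
  have h5 := key5 hconv
  have back : ∀ x : X, x ∈ {x : X | proxSet γ f x = {x}} → x ∈ {x : X | ∀ y, f x ≤ f y} :=
    fun x hx => h5 (inc4 (inc3 hx))
  refine ⟨Set.Subset.antisymm inc1 (fun x hx => back x (inc2 hx)),
    Set.Subset.antisymm inc2 (fun x hx => inc1 (back x hx)),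
    Set.Subset.antisymm inc3 (fun x hx => inc2 (inc1 (h5 (inc4 hx)))),
    Set.Subset.antisymm inc4 (fun x hx => inc3 (inc2 (inc1 (h5 hx))))⟩
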